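/- Let L be a degree-k pseudoexpectation on ℝ[u₁,…,u_n], and let W be a sum-of-squares polynomial of degree d < k with L(W) > 0. Then the linear functional L' defined on polynomials P of degree at most k − d by L'(P) = L(W·P)/L(W) is a degree-(k−d) pseudoexpectation on ℝ[u₁,…,u_n]. -/

import Mathlib

open MvPolynomial
open MvPolynomial

private lemma hc_top_ne_zero {σ : Type*} {q : MvPolynomial σ ℝ} (hq : q ≠ 0) :
    homogeneousComponent q.totalDegree q ≠ 0 := by
  obtain ⟨d, hd, hdeg⟩ := q.support.exists_mem_eq_sup
    (Finset.nonempty_iff_ne_empty.mpr (mt MvPolynomial.support_eq_empty.mp hq)) Finsupp.degree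
  have : coeff d (homogeneousComponent q.totalDegree q) = coeff d q := by
    rw [coeff_homogeneousComponent, if_pos]
    exact hdeg.symm
  intro h
  rw [h, coeff_zero] at this
  exact (mem_support_iff.mp hd) this.symm

private lemma hc_sq {σ : Type*} (q : MvPolynomial σ ℝ) (m : ℕ) (h : q.totalDegree ≤ m) :
    homogeneousComponent (2 * m) (q ^ 2) = (homogeneousComponent m q) ^ 2 := by
  set φ := homogeneousComponent m q with hφ
  have hφhom : φ ∈ homogeneousSubmodule σ ℝ m := homogeneousComponent_mem m q
  have hφ2 : (φ ^ 2) ∈ homogeneousSubmodule σ ℝ (2 * m) := by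
    have := (homogeneousComponent_isHomogeneous m q).mul (homogeneousComponent_isHomogeneous m q)
    rw [mem_homogeneousSubmodule, sq, two_mul]
    exact this
  set r := q - φ with hr
  by_cases hr0 : r = 0
  · have : q = φ := by rw [hr, sub_eq_zero] at hr0; exact hr0
    rw [this, homogeneousComponent_of_mem hφ2, if_pos rfl]
  · -- deg r < m
    have hrle : r.totalDegree ≤ m := by
      have h1 : φ.totalDegree ≤ m := by
        by_cases hφ0 : φ = 0
        · simp [hφ0]
        · exact (((mem_homogeneousSubmodule m φ).mp hφhom).totalDegree hφ0).le
      calc r.totalDegree ≤ max q.totalDegree φ.totalDegree := by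
            rw [hr, sub_eq_add_neg]
            refine (totalDegree_add q (-φ)).trans ?_
            simp [totalDegree_neg]
          _ ≤ m := max_le h h1
    have hrlt : r.totalDegree < m := by
      rcases lt_or_eq_of_le hrle with h' | h'
      · exact h'
      · exfalso
        obtain ⟨d, hd, hdeg⟩ := r.support.exists_mem_eq_sup
          (Finset.nonempty_iff_ne_empty.mpr (mt MvPolynomial.support_eq_empty.mp hr0)) Finsupp.degree
        have hdm : d.degree = m := by rw [← hdeg]; exact h'
        have : coeff d r = 0 := by
          rw [hr, coeff_sub, hφ, coeff_homogeneousComponent, if_pos hdm, sub_self]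
        exact (mem_support_iff.mp hd) this
    have hq : q = φ + r := by rw [hr]; ring
    have hsplit : q ^ 2 = φ ^ 2 + (2 * φ * r + r ^ 2) := by rw [hq]; ring
    have hzero : homogeneousComponent (2 * m) (2 * φ * r + r ^ 2) = 0 := by
      apply homogeneousComponent_eq_zero
      have h1 : (2 * φ * r).totalDegree < 2 * m := by
        calc (2 * φ * r).totalDegree ≤ (2 * φ).totalDegree + r.totalDegree :=
              totalDegree_mul _ _
          _ ≤ φ.totalDegree + r.totalDegree := by
              gcongr
              calc (2 * φ).totalDegree ≤ (2:MvPolynomial σ ℝ).totalDegree + φ.totalDegree :=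
                    totalDegree_mul _ _
                _ = φ.totalDegree := by
                    rw [show ((2:MvPolynomial σ ℝ)) = C (2:ℝ) from (map_ofNat C 2).symm,
                      totalDegree_C, zero_add]
          _ < m + m := by
              have h1 : φ.totalDegree ≤ m := by
                by_cases hφ0 : φ = 0
                · simp [hφ0]
                · exact (((mem_homogeneousSubmodule m φ).mp hφhom).totalDegree hφ0).le
              omega
          _ = 2 * m := by ring
      have h2 : (r ^ 2).totalDegree < 2 * m := by
        calc (r ^ 2).totalDegree ≤ 2 * r.totalDegree := by
              have := totalDegree_pow r 2; omega
          _ < 2 * m := by omega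
      calc (2 * φ * r + r ^ 2).totalDegree
          ≤ max (2 * φ * r).totalDegree (r ^ 2).totalDegree := totalDegree_add _ _
        _ < 2 * m := max_lt h1 h2
    rw [hsplit, map_add, hzero, add_zero, homogeneousComponent_of_mem hφ2, if_pos rfl]

private lemma sos_zero {σ : Type*} {r : ℕ} {φ : Fin r → MvPolynomial σ ℝ}
    (h : ∑ i, φ i ^ 2 = 0) (i : Fin r) : φ i = 0 := by
  apply MvPolynomial.funext
  intro x
  have hx : ∑ j, (eval x (φ j)) ^ 2 = 0 := by
    have := congrArg (eval x) h
    simpa [eval_sum] using this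
  have := (Finset.sum_eq_zero_iff_of_nonneg (fun j _ => sq_nonneg (eval x (φ j)))).mp hx
    i (Finset.mem_univ i)
  have : eval x (φ i) = 0 := by
    have h2 := this
    nlinarith [sq_nonneg (eval x (φ i))]
  simpa using this

private lemma sos_deg {n r : ℕ} (q : Fin r → MvPolynomial (Fin n) ℝ) (i : Fin r) :
    2 * (q i).totalDegree ≤ (∑ j, q j ^ 2).totalDegree := by
  by_cases h0 : q i = 0
  · simp [h0]
  set m := Finset.univ.sup (fun j => (q j).totalDegree) with hm
  have hi : (q i).totalDegree ≤ m :=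
    Finset.le_sup (f := fun j => (q j).totalDegree) (Finset.mem_univ i)
  have key : 2 * m ≤ (∑ j, q j ^ 2).totalDegree := by
    by_contra hcon
    push_neg at hcon
    have hcomp : homogeneousComponent (2 * m) (∑ j, q j ^ 2) = 0 :=
      homogeneousComponent_eq_zero _ _ hcon
    have hsum : ∑ j, (homogeneousComponent m (q j)) ^ 2 = 0 := by
      rw [← hcomp, map_sum]
      exact Finset.sum_congr rfl fun j _ =>
        (hc_sq (q j) m (Finset.le_sup (f := fun j => (q j).totalDegree) (Finset.mem_univ j))).symm
    obtain ⟨j, _, hjdeg⟩ := Finset.univ.exists_mem_eq_sup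
      (Finset.univ_nonempty_iff.mpr ⟨i⟩) (fun j => (q j).totalDegree)
    have hm1 : 1 ≤ m := by omega
    have hqj : q j ≠ 0 := by
      intro hz
      rw [hz, totalDegree_zero] at hjdeg
      omega
    have hz := sos_zero hsum j
    have : homogeneousComponent (q j).totalDegree (q j) = 0 := by
      rw [← hjdeg, ← hm]; exact hz
    exact hc_top_ne_zero hqj this
  omega


/-- A polynomial is a sum of squares if it is a finite sum of squares of polynomials. -/
def IsSOS {σ : Type*} (p : MvPolynomial σ ℝ) : Prop :=
  ∃ (r : ℕ) (q : Fin r → MvPolynomial σ ℝ), p = ∑ i, q i ^ 2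

/-- A degree-`k` pseudoexpectation on `ℝ[u₁,…,u_n]`: a linear functional with `L 1 = 1`
and `L (P²) ≥ 0` whenever `deg (P²) ≤ k`. -/
def IsPseudoExpectation (n k : ℕ) (L : MvPolynomial (Fin n) ℝ → ℝ) : Prop :=
  (∀ P Q : MvPolynomial (Fin n) ℝ, L (P + Q) = L P + L Q) ∧
  (∀ (c : ℝ) (P : MvPolynomial (Fin n) ℝ), L (c • P) = c * L P) ∧
  L 1 = 1 ∧
  ∀ P : MvPolynomial (Fin n) ℝ, (P ^ 2).totalDegree ≤ k → 0 ≤ L (P ^ 2)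

/-- Reweighing: if `L` is a degree-`k` pseudoexpectation and `W` is a sum-of-squares
polynomial of degree `d < k` with `L W > 0`, then `P ↦ L (W·P) / L W` is a
degree-`(k-d)` pseudoexpectation. -/
theorem stmt9 (n k d : ℕ) (L : MvPolynomial (Fin n) ℝ → ℝ)
    (hL : IsPseudoExpectation n k L)
    (W : MvPolynomial (Fin n) ℝ) (hW : IsSOS W) (hWdeg : W.totalDegree ≤ d)
    (hdk : d < k) (hLW : 0 < L W) :
    IsPseudoExpectation n (k - d) (fun P => L (W * P) / L W) := by
  obtain ⟨hadd, hsmul, hone, hsqL⟩ := hL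
  have L0 : L 0 = 0 := by
    have := hsmul 0 1
    simpa using this
  have hLsum : ∀ {r : ℕ} (f : Fin r → MvPolynomial (Fin n) ℝ),
      L (∑ i, f i) = ∑ i, L (f i) := by
    intro r f
    classical
    induction (Finset.univ : Finset (Fin r)) using Finset.induction with
    | empty => simpa using L0
    | insert _ _ hx ih =>
      rw [Finset.sum_insert hx, hadd, ih, Finset.sum_insert hx]
  refine ⟨?_, ?_, ?_, ?_⟩
  · intro P Q
    simp only [mul_add, hadd, add_div]
  · intro c P
    simp only [mul_smul_comm, hsmul, mul_div_assoc]
  · simp only [mul_one, div_self (ne_of_gt hLW)]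
  · intro P hP
    obtain ⟨r, q, hWq⟩ := hW
    have key : W * P ^ 2 = ∑ i, (q i * P) ^ 2 := by
      rw [hWq, Finset.sum_mul]
      exact Finset.sum_congr rfl fun i _ => (mul_pow _ _ _).symm
    have hterm : ∀ i : Fin r, 0 ≤ L ((q i * P) ^ 2) := by
      intro i
      apply hsqL
      have hdeg1 : ((q i) ^ 2).totalDegree ≤ d := by
        have h1 : 2 * (q i).totalDegree ≤ (∑ j, q j ^ 2).totalDegree := sos_deg q i
        have h2 : ((q i) ^ 2).totalDegree ≤ 2 * (q i).totalDegree := by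
          have := totalDegree_pow (q i) 2
          omega
        calc ((q i) ^ 2).totalDegree ≤ 2 * (q i).totalDegree := h2
          _ ≤ W.totalDegree := by rw [hWq]; exact h1
          _ ≤ d := hWdeg
      calc ((q i * P) ^ 2).totalDegree = ((q i) ^ 2 * P ^ 2).totalDegree := by
            rw [mul_pow]
        _ ≤ ((q i) ^ 2).totalDegree + (P ^ 2).totalDegree := totalDegree_mul _ _
        _ ≤ d + (k - d) := add_le_add hdeg1 hP
        _ ≤ k := by omega
    have : 0 ≤ L (W * P ^ 2) := by
      rw [key, hLsum]
      exact Finset.sum_nonneg fun i _ => hterm i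
    exact div_nonneg this hLW.le
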